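/- A subset K ⊆ 𝒮 has compact closure in (𝒮, d_𝒮) if and only if all three of the following hold: (i) sup_{ξ∈K} |||ξ|||_𝒮 < ∞; (ii) for every ε > 0 there exists R > 0 such that sup_{ξ∈K} ∑_{x∈L⁻¹ℤ, |x|≥R} ‖ξ(x)‖_{ℓ¹}/(1+|x|)² ≤ ε; (iii) for every x ∈ L⁻¹ℤ there exists J ∈ ℕ₀ such that ξ_k(x) = 0 for every k ≥ J and every ξ ∈ K. -/

import Mathlib

open scoped ENNReal NNReal BigOperators

namespace SpatialMuller

/-- Configurations: `ξ n k` is the number of particles carrying `k` mutations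
living at the deme with position `n / L`. -/
abbrev Config : Type := ℤ → ℕ → ℕ

/-- The real position `n / L` of the deme indexed by `n : ℤ`. -/
noncomputable def pos (L : ℝ) (n : ℤ) : ℝ := (n : ℝ) / L

/-- The weight `(1 + |x|) ^ 2` at the deme indexed by `n`, as an extended real. -/
noncomputable def w (L : ℝ) (n : ℤ) : ℝ≥0∞ := ENNReal.ofReal ((1 + |pos L n|) ^ 2)

lemma w_ne_zero (L : ℝ) (n : ℤ) : w L n ≠ 0 := by
  have h : (0 : ℝ) < (1 + |pos L n|) ^ 2 := by positivity
  simp only [w, ne_eq, ENNReal.ofReal_eq_zero, not_le]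
  exact h

lemma w_ne_top (L : ℝ) (n : ℤ) : w L n ≠ ∞ := ENNReal.ofReal_ne_top

/-- `‖ξ(x)‖_{ℓ¹} ∈ [0,∞]`: the total number of particles at the deme indexed by `n`. -/
noncomputable def cellMass (ξ : Config) (n : ℤ) : ℝ≥0∞ := ∑' k : ℕ, (ξ n k : ℝ≥0∞)

/-- `|||ξ|||_𝒮`: the total weighted mass of the configuration `ξ`. -/
noncomputable def tmass (L : ℝ) (ξ : Config) : ℝ≥0∞ := ∑' n : ℤ, cellMass ξ n / w L n

/-- The `ℓ¹` distance between the contents of the deme indexed by `n`. -/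
noncomputable def cellDist (ξ ζ : Config) (n : ℤ) : ℝ≥0∞ :=
  ∑' k : ℕ, (((ξ n k : ℤ) - (ζ n k : ℤ)).natAbs : ℝ≥0∞)

/-- The metric `d_𝒮`, with values in `[0,∞]`. -/
noncomputable def dS (L : ℝ) (ξ ζ : Config) : ℝ≥0∞ := ∑' n : ℤ, cellDist ξ ζ n / w L n

/-- The state space `𝒮` of configurations with finite total weighted mass. -/
def SpaceS (L : ℝ) : Type := {ξ : Config // tmass L ξ ≠ ∞}

/-- `𝒮` carries the (extended) metric `d_𝒮`. -/
noncomputable instance instEMetricSpaceS (L : ℝ) : EMetricSpace (SpaceS L) where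
  edist ξ ζ := dS L ξ.1 ζ.1
  edist_self ξ := by
    simp [dS, cellDist]
  edist_comm ξ ζ := by
    simp only [dS]
    refine tsum_congr fun n => ?_
    congr 1
    simp only [cellDist]
    refine tsum_congr fun k => ?_
    congr 1
    omega
  edist_triangle ξ ζ ρ := by
    simp only [dS]
    have key : ∀ n : ℤ, cellDist ξ.1 ρ.1 n / w L n ≤
        cellDist ξ.1 ζ.1 n / w L n + cellDist ζ.1 ρ.1 n / w L n := by
      intro n
      rw [← ENNReal.add_div]
      refine ENNReal.div_le_div_right ?_ _
      simp only [cellDist]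
      rw [← ENNReal.tsum_add]
      refine ENNReal.tsum_le_tsum fun k => ?_
      have htri : ((ξ.1 n k : ℤ) - (ρ.1 n k : ℤ)).natAbs ≤
          ((ξ.1 n k : ℤ) - (ζ.1 n k : ℤ)).natAbs + ((ζ.1 n k : ℤ) - (ρ.1 n k : ℤ)).natAbs := by
        omega
      exact_mod_cast htri
    exact (ENNReal.tsum_le_tsum key).trans (le_of_eq ENNReal.tsum_add)
  eq_of_edist_eq_zero := by
    intro ξ ζ h
    apply Subtype.ext
    funext n k
    simp only [dS, ENNReal.tsum_eq_zero] at h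
    rcases ENNReal.div_eq_zero_iff.mp (h n) with h1 | h1
    · simp only [cellDist, ENNReal.tsum_eq_zero] at h1
      have h2 := h1 k
      have h3 : ((ξ.1 n k : ℤ) - (ζ.1 n k : ℤ)).natAbs = 0 := by exact_mod_cast h2
      omega
    · exact absurd h1 (w_ne_top L n)

/-! ### Auxiliary lemmas -/

noncomputable def tail (L R : ℝ) (ξ : Config) : ℝ≥0∞ :=
  ∑' n : ℤ, if R ≤ |pos L n| then cellMass ξ n / w L n else 0

lemma flatten_aux (L : ℝ) (f : ℤ → ℕ → ℝ≥0∞) :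
    ∑' n : ℤ, (∑' k : ℕ, f n k) / w L n = ∑' p : ℤ × ℕ, f p.1 p.2 / w L p.1 := by
  rw [show (∑' p : ℤ × ℕ, f p.1 p.2 / w L p.1)
      = ∑' (n : ℤ) (k : ℕ), f n k / w L n from ENNReal.tsum_prod (f := fun n k => f n k / w L n)]
  refine tsum_congr fun n => ?_
  rw [div_eq_mul_inv, ← ENNReal.tsum_mul_right]
  exact tsum_congr fun k => (div_eq_mul_inv _ _).symm

lemma tmass_flat (L : ℝ) (ξ : Config) :
    tmass L ξ = ∑' p : ℤ × ℕ, (ξ p.1 p.2 : ℝ≥0∞) / w L p.1 := flatten_aux L _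

lemma dS_flat (L : ℝ) (ξ ζ : Config) :
    dS L ξ ζ = ∑' p : ℤ × ℕ, (((ξ p.1 p.2 : ℤ) - (ζ p.1 p.2 : ℤ)).natAbs : ℝ≥0∞) / w L p.1 :=
  flatten_aux L _

lemma tail_flat (L R : ℝ) (ξ : Config) :
    tail L R ξ = ∑' p : ℤ × ℕ,
      (if R ≤ |pos L p.1| then (ξ p.1 p.2 : ℝ≥0∞) / w L p.1 else 0) := by
  rw [show (∑' p : ℤ × ℕ, (if R ≤ |pos L p.1| then (ξ p.1 p.2 : ℝ≥0∞) / w L p.1 else 0))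
      = ∑' (n : ℤ) (k : ℕ), (if R ≤ |pos L n| then (ξ n k : ℝ≥0∞) / w L n else 0) from
      ENNReal.tsum_prod (f := fun n k => if R ≤ |pos L n| then (ξ n k : ℝ≥0∞) / w L n else 0)]
  refine tsum_congr fun n => ?_
  split_ifs with h
  · rw [cellMass, div_eq_mul_inv, ← ENNReal.tsum_mul_right]
    exact tsum_congr fun k => (div_eq_mul_inv _ _).symm
  · exact tsum_zero.symm

lemma tail_antitone (L : ℝ) {R R' : ℝ} (h : R ≤ R') (ξ : Config) :
    tail L R' ξ ≤ tail L R ξ := by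
  refine ENNReal.tsum_le_tsum fun n => ?_
  split_ifs with h1 h2
  · exact le_rfl
  · exact absurd (h.trans h1) h2
  · exact zero_le
  · exact le_rfl

lemma tail_le_tmass (L R : ℝ) (ξ : Config) : tail L R ξ ≤ tmass L ξ := by
  refine ENNReal.tsum_le_tsum fun n => ?_
  split_ifs
  · exact le_rfl
  · exact zero_le

lemma cellMass_div_le_tmass (L : ℝ) (ξ : Config) (n : ℤ) :
    cellMass ξ n / w L n ≤ tmass L ξ := ENNReal.le_tsum n

lemma coord_le_cellMass (ξ : Config) (n : ℤ) (k : ℕ) :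
    (ξ n k : ℝ≥0∞) ≤ cellMass ξ n := ENNReal.le_tsum k

lemma tmass_le_dS_add (L : ℝ) (ξ ζ : Config) :
    tmass L ξ ≤ dS L ξ ζ + tmass L ζ := by
  rw [tmass_flat, dS_flat, tmass_flat, ← ENNReal.tsum_add]
  refine ENNReal.tsum_le_tsum fun p => ?_
  rw [← ENNReal.add_div]
  refine ENNReal.div_le_div_right ?_ _
  have : ξ p.1 p.2 ≤ ((ξ p.1 p.2 : ℤ) - (ζ p.1 p.2 : ℤ)).natAbs + ζ p.1 p.2 := by omega
  exact_mod_cast this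

lemma tail_le_dS_add (L R : ℝ) (ξ ζ : Config) :
    tail L R ξ ≤ dS L ξ ζ + tail L R ζ := by
  rw [tail_flat, dS_flat, tail_flat, ← ENNReal.tsum_add]
  refine ENNReal.tsum_le_tsum fun p => ?_
  split_ifs with h
  · rw [← ENNReal.add_div]
    refine ENNReal.div_le_div_right ?_ _
    have : ξ p.1 p.2 ≤ ((ξ p.1 p.2 : ℤ) - (ζ p.1 p.2 : ℤ)).natAbs + ζ p.1 p.2 := by omega
    exact_mod_cast this
  · exact zero_le

lemma dS_le_tails (L R : ℝ) (ξ ζ : Config)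
    (h : ∀ n k, |pos L n| < R → ξ n k = ζ n k) :
    dS L ξ ζ ≤ tail L R ξ + tail L R ζ := by
  rw [tail_flat, dS_flat, tail_flat, ← ENNReal.tsum_add]
  refine ENNReal.tsum_le_tsum fun p => ?_
  split_ifs with hc
  · rw [← ENNReal.add_div]
    refine ENNReal.div_le_div_right ?_ _
    have : ((ξ p.1 p.2 : ℤ) - (ζ p.1 p.2 : ℤ)).natAbs ≤ ξ p.1 p.2 + ζ p.1 p.2 := by omega
    exact_mod_cast this
  · have := h p.1 p.2 (lt_of_not_ge hc)
    simp [this]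

lemma freeze (L : ℝ) {ξ ζ : Config} {n : ℤ} (h : dS L ξ ζ < (w L n)⁻¹) :
    ∀ k, ξ n k = ζ n k := by
  intro k
  have h1 : (((ξ n k : ℤ) - (ζ n k : ℤ)).natAbs : ℝ≥0∞) / w L n ≤ dS L ξ ζ := by
    rw [dS_flat]; exact ENNReal.le_tsum (n, k)
  have h2 : (((ξ n k : ℤ) - (ζ n k : ℤ)).natAbs : ℝ≥0∞) / w L n < (w L n)⁻¹ := h1.trans_lt h
  rw [ENNReal.div_lt_iff (Or.inl (w_ne_zero L n)) (Or.inl (w_ne_top L n)),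
    ENNReal.inv_mul_cancel (w_ne_zero L n) (w_ne_top L n)] at h2
  have h3 : ((ξ n k : ℤ) - (ζ n k : ℤ)).natAbs < 1 := by exact_mod_cast h2
  omega

lemma exists_ofReal_lt {ε : ℝ≥0∞} (hε : 0 < ε) : ∃ δ : ℝ, 0 < δ ∧ ENNReal.ofReal δ < ε := by
  rcases eq_or_ne ε ∞ with rfl | h
  · exact ⟨1, one_pos, by simp⟩
  · have hp : 0 < ε.toReal := ENNReal.toReal_pos hε.ne' h
    refine ⟨ε.toReal / 2, by positivity, ?_⟩
    rw [ENNReal.ofReal_lt_iff_lt_toReal (by positivity) h]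
    linarith

lemma finite_support {f : ℕ → ℕ} (h : (∑' k, (f k : ℝ≥0∞)) ≠ ∞) :
    ∃ J : ℕ, ∀ k, J ≤ k → f k = 0 := by
  have hfin : {k | f k ≠ 0}.Finite := by
    by_contra hinf
    have : Infinite {k | f k ≠ 0} := Set.Infinite.to_subtype hinf
    have h1 : (∑' k : {k | f k ≠ 0}, (1 : ℝ≥0∞)) = ∞ :=
      ENNReal.tsum_const_eq_top_of_ne_zero one_ne_zero
    have h2 : (∑' k : {k | f k ≠ 0}, (1 : ℝ≥0∞)) ≤ ∑' k : {k | f k ≠ 0}, (f k : ℝ≥0∞) :=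
      ENNReal.tsum_le_tsum fun k => by
        have : 1 ≤ f k.1 := Nat.one_le_iff_ne_zero.mpr k.2
        exact_mod_cast this
    have h3 : (∑' k : {k | f k ≠ 0}, ((f k : ℕ) : ℝ≥0∞)) ≤ ∑' k, (f k : ℝ≥0∞) :=
      ENNReal.tsum_comp_le_tsum_of_injective Subtype.val_injective _
    exact h (top_le_iff.mp ((h1 ▸ h2).trans h3))
  obtain ⟨J, hJ⟩ := hfin.bddAbove
  refine ⟨J + 1, fun k hk => by_contra fun hne => ?_⟩
  have := hJ (Set.mem_setOf.mpr hne)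
  omega

lemma cellMass_ne_top (L : ℝ) {ξ : Config} (h : tmass L ξ ≠ ∞) (n : ℤ) :
    cellMass ξ n ≠ ∞ := by
  intro htop
  have h1 : cellMass ξ n / w L n ≤ tmass L ξ := cellMass_div_le_tmass L ξ n
  rw [htop] at h1
  rw [ENNReal.top_div_of_ne_top (w_ne_top L n)] at h1
  exact h (top_le_iff.mp h1)

lemma exists_tail_small (L : ℝ) {ζ : Config} (h : tmass L ζ ≠ ∞) {δ : ℝ} (hδ : 0 < δ) :
    ∃ R : ℝ, 0 < R ∧ tail L R ζ ≤ ENNReal.ofReal δ := by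
  have htt := ENNReal.tendsto_tsum_compl_atTop_zero (f := fun n : ℤ => cellMass ζ n / w L n) h
  have hpos : (0 : ℝ≥0∞) < ENNReal.ofReal δ := by simpa using hδ
  obtain ⟨s₀, hs₀⟩ := Filter.eventually_atTop.mp (htt.eventually_lt_const hpos)
  set R : ℝ := 1 + ((s₀.sup fun n => ⌈|pos L n|⌉₊ : ℕ) : ℝ) with hR
  refine ⟨R, by positivity, ?_⟩
  have hmem : ∀ n ∈ s₀, ¬ (R ≤ |pos L n|) := by
    intro n hn hle
    have h1 : |pos L n| ≤ (⌈|pos L n|⌉₊ : ℝ) := Nat.le_ceil _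
    have h2 : (⌈|pos L n|⌉₊ : ℝ) ≤ ((s₀.sup fun n => ⌈|pos L n|⌉₊ : ℕ) : ℝ) := by
      exact_mod_cast Finset.le_sup (f := fun n => ⌈|pos L n|⌉₊) hn
    linarith [hR ▸ hle]
  have hle : tail L R ζ ≤
      ∑' n : ℤ, Set.indicator {n : ℤ | n ∉ s₀} (fun n => cellMass ζ n / w L n) n := by
    refine ENNReal.tsum_le_tsum fun n => ?_
    by_cases hn : n ∈ s₀
    · simp [hmem n hn, Set.indicator, hn]
    · simp only [Set.indicator, Set.mem_setOf_eq, hn, not_false_iff, if_true]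
      split_ifs
      · exact le_rfl
      · exact zero_le
  rw [← tsum_subtype] at hle
  exact hle.trans (hs₀ s₀ le_rfl).le

lemma freeze_of_edist_lt (L : ℝ) {ξ ζ : SpaceS L} {n : ℤ}
    (h : edist ξ ζ < (w L n)⁻¹) : ∀ k, ξ.1 n k = ζ.1 n k :=
  freeze L h

lemma edist_eq (L : ℝ) (ξ ζ : SpaceS L) : edist ξ ζ = dS L ξ.1 ζ.1 := rfl

/-- A subset `K ⊆ 𝒮` has compact closure in `(𝒮, d_𝒮)` if and only if:
(i) `sup_{ξ∈K} |||ξ|||_𝒮 < ∞`; (ii) for every `ε > 0` there is `R > 0` such that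
`sup_{ξ∈K} ∑_{|x|≥R} ‖ξ(x)‖_{ℓ¹}/(1+|x|)² ≤ ε`; (iii) for every deme `x` there is `J` with
`ξ_k(x) = 0` for all `k ≥ J` and all `ξ ∈ K`. -/
theorem statement1 (L : ℝ) (hL : 0 < L) (K : Set (SpaceS L)) :
    IsCompact (closure K) ↔
      ((⨆ ξ ∈ K, tmass L ξ.1) ≠ ∞ ∧
        (∀ ε : ℝ, 0 < ε → ∃ R : ℝ, 0 < R ∧ ∀ ξ ∈ K,
          (∑' x : ℤ, if R ≤ |pos L x| then cellMass ξ.1 x / w L x else 0) ≤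
            ENNReal.ofReal ε) ∧
        (∀ x : ℤ, ∃ J : ℕ, ∀ ξ ∈ K, ∀ k : ℕ, J ≤ k → ξ.1 x k = 0)) := by
  constructor
  · intro hcomp
    have htb : TotallyBounded K := hcomp.totallyBounded.subset subset_closure
    refine ⟨?_, ?_, ?_⟩
    · -- (i) bounded total mass
      obtain ⟨t, htfin, hcover⟩ := EMetric.totallyBounded_iff.mp htb 1 one_pos
      set M : ℝ≥0∞ := htfin.toFinset.sup fun ζ => tmass L ζ.1 with hM
      have hMlt : M < ∞ := by
        rw [hM]
        refine Finset.sup_lt_iff (by simp) |>.mpr fun ζ _ => ?_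
        exact lt_top_iff_ne_top.mpr ζ.2
      have hb : ∀ ξ ∈ K, tmass L ξ.1 ≤ M + 1 := by
        intro ξ hξ
        obtain ⟨ζ, hζt, hζd⟩ := Set.mem_iUnion₂.mp (hcover hξ)
        rw [EMetric.mem_ball, edist_eq] at hζd
        calc tmass L ξ.1 ≤ dS L ξ.1 ζ.1 + tmass L ζ.1 := tmass_le_dS_add L _ _
          _ ≤ 1 + M := add_le_add hζd.le (hM ▸ Finset.le_sup (f := fun ζ : SpaceS L => tmass L ζ.1) (htfin.mem_toFinset.mpr hζt))
          _ = M + 1 := add_comm _ _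
      have : (⨆ ξ ∈ K, tmass L ξ.1) ≤ M + 1 := iSup₂_le hb
      exact ne_top_of_le_ne_top (by simp [hMlt.ne, ENNReal.add_ne_top]) this
    · -- (ii) uniform tails
      intro ε hε
      have hhalf : (0:ℝ≥0∞) < ENNReal.ofReal (ε/2) := by simp [hε]
      obtain ⟨t, htfin, hcover⟩ := EMetric.totallyBounded_iff.mp htb _ hhalf
      classical
      choose r hr0 hrtail using fun ζ : SpaceS L => exists_tail_small L ζ.2 (half_pos hε)
      set R : ℝ := 1 + ((htfin.toFinset.sup fun ζ => ⌈r ζ⌉₊ : ℕ) : ℝ) with hRdef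
      refine ⟨R, by positivity, fun ξ hξ => ?_⟩
      obtain ⟨ζ, hζt, hζd⟩ := Set.mem_iUnion₂.mp (hcover hξ)
      rw [EMetric.mem_ball, edist_eq] at hζd
      have hRζ : r ζ ≤ R := by
        have h1 : r ζ ≤ (⌈r ζ⌉₊ : ℝ) := Nat.le_ceil _
        have h2 : (⌈r ζ⌉₊ : ℝ) ≤ ((htfin.toFinset.sup fun ζ => ⌈r ζ⌉₊ : ℕ) : ℝ) := by
          exact_mod_cast Finset.le_sup (f := fun ζ => ⌈r ζ⌉₊) (htfin.mem_toFinset.mpr hζt)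
        linarith
      have : tail L R ξ.1 ≤ dS L ξ.1 ζ.1 + tail L R ζ.1 := tail_le_dS_add L R _ _
      calc (∑' x : ℤ, if R ≤ |pos L x| then cellMass ξ.1 x / w L x else 0)
          = tail L R ξ.1 := rfl
        _ ≤ dS L ξ.1 ζ.1 + tail L R ζ.1 := tail_le_dS_add L R _ _
        _ ≤ ENNReal.ofReal (ε/2) + ENNReal.ofReal (ε/2) :=
            add_le_add hζd.le ((tail_antitone L hRζ ζ.1).trans (hrtail ζ))
        _ = ENNReal.ofReal ε := by
            rw [← ENNReal.ofReal_add (by positivity) (by positivity)]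
            norm_num
    · -- (iii) uniform finite support per deme
      intro n
      have hwpos : (0:ℝ≥0∞) < (w L n)⁻¹ := ENNReal.inv_pos.mpr (w_ne_top L n)
      obtain ⟨t, htfin, hcover⟩ := EMetric.totallyBounded_iff.mp htb _ hwpos
      classical
      choose j hj using fun ζ : SpaceS L => finite_support (cellMass_ne_top L ζ.2 n)
      refine ⟨htfin.toFinset.sup j, fun ξ hξ k hk => ?_⟩
      obtain ⟨ζ, hζt, hζd⟩ := Set.mem_iUnion₂.mp (hcover hξ)
      rw [EMetric.mem_ball, edist_eq] at hζd
      rw [freeze L hζd k]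
      exact hj ζ k (le_trans (Finset.le_sup (htfin.mem_toFinset.mpr hζt)) hk)
  · rintro ⟨h1, h2, h3⟩
    classical
    choose J hJ using h3
    set C : ℝ≥0∞ := ⨆ ξ ∈ K, tmass L ξ.1 with hCdef
    have hKC : ∀ ξ ∈ K, tmass L ξ.1 ≤ C := fun ξ hξ =>
      le_iSup₂ (f := fun (ξ : SpaceS L) (_ : ξ ∈ K) => tmass L ξ.1) ξ hξ
    -- transfer the three conditions to the closure
    have hclJ : ∀ ξ ∈ closure K, ∀ k, ∀ n : ℤ, J n ≤ k → ξ.1 n k = 0 := by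
      intro ξ hξ k n hk
      obtain ⟨ζ, hζK, hζd⟩ := EMetric.mem_closure_iff.mp hξ _ (ENNReal.inv_pos.mpr (w_ne_top L n))
      rw [edist_eq] at hζd
      rw [freeze L hζd k]
      exact hJ n ζ hζK k hk
    have hcl_tmass : ∀ ξ ∈ closure K, tmass L ξ.1 ≤ C := by
      intro ξ hξ
      refine ENNReal.le_of_forall_pos_le_add fun ε hε _ => ?_
      obtain ⟨ζ, hζK, hζd⟩ := EMetric.mem_closure_iff.mp hξ (ε : ℝ≥0∞) (by exact_mod_cast hε)
      rw [edist_eq] at hζd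
      calc tmass L ξ.1 ≤ dS L ξ.1 ζ.1 + tmass L ζ.1 := tmass_le_dS_add L _ _
        _ ≤ (ε : ℝ≥0∞) + C := add_le_add hζd.le (hKC ζ hζK)
        _ = C + ε := add_comm _ _
    have hcl_tail : ∀ δ : ℝ, 0 < δ → ∃ R : ℝ, 0 < R ∧ ∀ ξ ∈ closure K,
        tail L R ξ.1 ≤ ENNReal.ofReal δ := by
      intro δ hδ
      obtain ⟨R, hR, hRt⟩ := h2 (δ/2) (half_pos hδ)
      refine ⟨R, hR, fun ξ hξ => ?_⟩
      refine ENNReal.le_of_forall_pos_le_add fun ε hε _ => ?_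
      obtain ⟨ζ, hζK, hζd⟩ := EMetric.mem_closure_iff.mp hξ (ε : ℝ≥0∞) (by exact_mod_cast hε)
      rw [edist_eq] at hζd
      calc tail L R ξ.1 ≤ dS L ξ.1 ζ.1 + tail L R ζ.1 := tail_le_dS_add L R _ _
        _ ≤ (ε : ℝ≥0∞) + ENNReal.ofReal (δ/2) := add_le_add hζd.le (hRt ζ hζK)
        _ ≤ ENNReal.ofReal δ + ε := by
            rw [add_comm]
            exact add_le_add (ENNReal.ofReal_le_ofReal (by linarith)) le_rfl
    -- sequential compactness
    suffices hseq : IsSeqCompact (closure K) from hseq.isCompact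
    intro u hu
    -- uniform coordinate bounds
    set B : ℤ → ℕ := fun n => ⌈(C * w L n).toReal⌉₊ with hBdef
    have hB : ∀ ξ ∈ closure K, ∀ n k, ξ.1 n k ≤ B n := by
      intro ξ hξ n k
      have hc : cellMass ξ.1 n ≤ C * w L n := by
        rw [← ENNReal.div_le_iff (w_ne_zero L n) (w_ne_top L n)]
        exact (cellMass_div_le_tmass L ξ.1 n).trans (hcl_tmass ξ hξ)
      have hck : (ξ.1 n k : ℝ≥0∞) ≤ C * w L n := (coord_le_cellMass ξ.1 n k).trans hc
      have hfin : C * w L n ≠ ∞ := ENNReal.mul_ne_top h1 (w_ne_top L n)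
      have : ((ξ.1 n k : ℕ) : ℝ) ≤ (C * w L n).toReal := by
        have := ENNReal.toReal_mono hfin hck
        simpa using this
      exact_mod_cast this.trans (Nat.le_ceil _)
    set Y : Set Config := Set.univ.pi fun n : ℤ => Set.univ.pi fun _ : ℕ => Set.Iic (B n)
      with hYdef
    have hYcomp : IsCompact Y :=
      isCompact_univ_pi fun n => isCompact_univ_pi fun _ => (Set.finite_Iic (B n)).isCompact
    have hmemY : ∀ m, (u m).1 ∈ Y := by
      intro m
      simp only [hYdef, Set.mem_pi, Set.mem_univ, forall_true_left, Set.mem_Iic]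
      exact fun n k => hB (u m) (hu m) n k
    obtain ⟨g, hgY, φ, hφ, hconv⟩ := hYcomp.isSeqCompact hmemY
    -- coordinatewise eventual equality
    have hcoord : ∀ n k, ∀ᶠ m in Filter.atTop, (u (φ m)).1 n k = g n k := by
      intro n k
      have h1' := tendsto_pi_nhds.mp hconv n
      have h2' := tendsto_pi_nhds.mp h1' k
      rw [show nhds (g n k) = pure (g n k) from congrFun (nhds_discrete ℕ) _] at h2'
      exact Filter.tendsto_pure.mp h2'
    have hfinset : ∀ s : Finset (ℤ × ℕ), ∀ᶠ m in Filter.atTop,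
        ∀ p ∈ s, (u (φ m)).1 p.1 p.2 = g p.1 p.2 := by
      intro s
      exact (Filter.eventually_all_finset s).mpr fun p _ => hcoord p.1 p.2
    -- the limit configuration has finite mass
    have hgJ : ∀ n k, J n ≤ k → g n k = 0 := by
      intro n k hk
      obtain ⟨m, hm⟩ := (hcoord n k).exists
      rw [← hm]
      exact hclJ (u (φ m)) (hu (φ m)) k n hk
    have hg_tmass : tmass L g ≤ C := by
      rw [tmass_flat, ENNReal.tsum_eq_iSup_sum]
      refine iSup_le fun s => ?_
      obtain ⟨m, hm⟩ := (hfinset s).exists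
      have : (∑ p ∈ s, (g p.1 p.2 : ℝ≥0∞) / w L p.1)
          = ∑ p ∈ s, ((u (φ m)).1 p.1 p.2 : ℝ≥0∞) / w L p.1 :=
        Finset.sum_congr rfl fun p hp => by rw [hm p hp]
      rw [this]
      calc _ ≤ ∑' p : ℤ × ℕ, ((u (φ m)).1 p.1 p.2 : ℝ≥0∞) / w L p.1 := ENNReal.sum_le_tsum s
        _ = tmass L (u (φ m)).1 := (tmass_flat L _).symm
        _ ≤ C := hcl_tmass _ (hu _)
    have hg_tail : ∀ R : ℝ, ∀ c : ℝ≥0∞, (∀ m, tail L R (u (φ m)).1 ≤ c) → tail L R g ≤ c := by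
      intro R c hc
      rw [tail_flat, ENNReal.tsum_eq_iSup_sum]
      refine iSup_le fun s => ?_
      obtain ⟨m, hm⟩ := (hfinset s).exists
      have : (∑ p ∈ s, if R ≤ |pos L p.1| then (g p.1 p.2 : ℝ≥0∞) / w L p.1 else 0)
          = ∑ p ∈ s, if R ≤ |pos L p.1| then ((u (φ m)).1 p.1 p.2 : ℝ≥0∞) / w L p.1 else 0 :=
        Finset.sum_congr rfl fun p hp => by rw [hm p hp]
      rw [this]
      calc _ ≤ ∑' p : ℤ × ℕ, (if R ≤ |pos L p.1| then ((u (φ m)).1 p.1 p.2 : ℝ≥0∞) / w L p.1 else 0) :=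
            ENNReal.sum_le_tsum s
        _ = tail L R (u (φ m)).1 := (tail_flat L R _).symm
        _ ≤ c := hc m
    set xiInf : SpaceS L := ⟨g, ne_top_of_le_ne_top h1 hg_tmass⟩ with hxiInf
    -- convergence of the subsequence to xiInf
    have htend : Filter.Tendsto (u ∘ φ) Filter.atTop (nhds xiInf) := by
      rw [EMetric.tendsto_atTop]
      intro ε hε
      obtain ⟨δ, hδ, hδε⟩ := exists_ofReal_lt (ENNReal.half_pos hε.ne')
      obtain ⟨R, hR, hRt⟩ := hcl_tail δ hδ
      have hgt : tail L R g ≤ ENNReal.ofReal δ :=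
        hg_tail R _ fun m => hRt (u (φ m)) (hu (φ m))
      -- the finite window of relevant coordinates
      set N : ℕ := ⌈R * L⌉₊ with hN
      set I : Finset ℤ := Finset.Icc (-(N:ℤ)) (N:ℤ) with hI
      set F : Finset (ℤ × ℕ) := I ×ˢ Finset.range (I.sup J) with hF
      have hwin : ∀ n : ℤ, |pos L n| < R → n ∈ I := by
        intro n hn
        rw [pos, abs_div, abs_of_pos hL] at hn
        have h1' : |(n:ℝ)| < R * L := (div_lt_iff₀ hL).mp hn
        have h2' : R * L ≤ ((N : ℕ) : ℝ) := Nat.le_ceil _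
        have h3' : ((n.natAbs : ℕ) : ℝ) < ((N : ℕ) : ℝ) := by
          rw [show ((n.natAbs : ℕ) : ℝ) = |(n : ℝ)| by push_cast [Nat.cast_natAbs]; rfl]
          exact h1'.trans_le h2'
        have h4' : (n.natAbs : ℤ) < (N : ℤ) := by exact_mod_cast h3'
        rw [hI, Finset.mem_Icc]
        omega
      obtain ⟨m₀, hm₀⟩ := Filter.eventually_atTop.mp (hfinset F)
      refine ⟨m₀, fun m hm => ?_⟩
      have hagree : ∀ n k, |pos L n| < R → (u (φ m)).1 n k = g n k := by
        intro n k hn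
        by_cases hk : k < J n
        · refine hm₀ m hm (n, k) ?_
          rw [hF, Finset.mem_product]
          refine ⟨hwin n hn, Finset.mem_range.mpr (lt_of_lt_of_le hk ?_)⟩
          exact Finset.le_sup (hwin n hn)
        · push_neg at hk
          rw [hclJ (u (φ m)) (hu (φ m)) k n hk, hgJ n k hk]
      have hdist : dS L (u (φ m)).1 g ≤ tail L R (u (φ m)).1 + tail L R g :=
        dS_le_tails L R _ _ hagree
      have : edist ((u ∘ φ) m) xiInf ≤ ENNReal.ofReal δ + ENNReal.ofReal δ := by
        rw [Function.comp_apply, edist_eq]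
        exact hdist.trans (add_le_add (hRt _ (hu _)) hgt)
      calc edist ((u ∘ φ) m) xiInf ≤ ENNReal.ofReal δ + ENNReal.ofReal δ := this
        _ < ε / 2 + ε / 2 := ENNReal.add_lt_add hδε hδε
        _ = ε := ENNReal.add_halves ε
    exact ⟨xiInf, isClosed_closure.mem_of_tendsto htend
      (Filter.Eventually.of_forall fun m => hu (φ m)), φ, hφ, htend⟩

end SpatialMuller
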